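/- arXiv:1703.08304 — 6 statements merged into one kernel-verified Lean document; each statement's English description precedes it below -/
import Mathlib

section
/- Let C be a strongly connected category (every hom-set is nonempty) with pairwise coproducts, and let F : C → Ab be a functor to abelian groups. Then for any object c of C, the limit of F is isomorphic to the kernel of the map F(i₁) − F(i₂) : F(c) → F(c ⊔ c), where i₁, i₂ : c → c ⊔ c are the two coproduct inclusions. -/
open CategoryTheory CategoryTheory.Limits

/-- For a strongly connected category `C` with pairwise (binary) coproducts and a
functor `F : C ⥤ Ab`, for any object `c`, the limit of `F` is isomorphic to the kernel of
`F(i₁) - F(i₂) : F(c) ⟶ F(c ⊔ c)`, where `i₁, i₂` are the coproduct inclusions. -/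
theorem limit_iso_kernel_of_stronglyConnected
    (C : Type) [SmallCategory C]
    (hconn : ∀ c c' : C, Nonempty (c ⟶ c'))
    [HasBinaryCoproducts C]
    (F : C ⥤ AddCommGrpCat) (c : C) :
    Nonempty (limit F ≅ kernel (F.map (coprod.inl : c ⟶ c ⨿ c) - F.map (coprod.inr : c ⟶ c ⨿ c))) := by
  classical
  set g : F.obj c ⟶ F.obj (c ⨿ c) :=
    F.map (coprod.inl : c ⟶ c ⨿ c) - F.map (coprod.inr : c ⟶ c ⨿ c) with hg
  -- the kernel inclusion equalizes the two coproduct injections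
  have h0 : kernel.ι g ≫ F.map (coprod.inl : c ⟶ c ⨿ c)
      = kernel.ι g ≫ F.map (coprod.inr : c ⟶ c ⨿ c) := by
    have := kernel.condition g
    rw [hg, Preadditive.comp_sub, sub_eq_zero] at this
    exact this
  -- hence it equalizes any parallel pair out of c
  have key : ∀ {d : C} (f₁ f₂ : c ⟶ d),
      kernel.ι g ≫ F.map f₁ = kernel.ι g ≫ F.map f₂ := by
    intro d f₁ f₂
    have h₁ : f₁ = (coprod.inl : c ⟶ c ⨿ c) ≫ coprod.desc f₁ f₂ := (coprod.inl_desc f₁ f₂).symm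
    have h₂ : f₂ = (coprod.inr : c ⟶ c ⨿ c) ≫ coprod.desc f₁ f₂ := (coprod.inr_desc f₁ f₂).symm
    conv_lhs => rw [h₁]
    conv_rhs => rw [h₂]
    rw [F.map_comp, F.map_comp, ← Category.assoc, ← Category.assoc, h0]
  let f : ∀ d : C, c ⟶ d := fun d => (hconn c d).some
  let cone : Cone F :=
    { pt := kernel g
      π :=
        { app := fun d => kernel.ι g ≫ F.map (f d)
          naturality := by
            intro d d' φ
            dsimp
            rw [Category.id_comp, Category.assoc, ← F.map_comp]
            exact key (f d') (f d ≫ φ) } }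
  have hπ : ∀ d : C, cone.π.app d = kernel.ι g ≫ F.map (f d) := fun d => rfl
  have hπc : cone.π.app c = kernel.ι g := by
    rw [hπ c, key (f c) (𝟙 c), F.map_id, Category.comp_id]
  have hlim : IsLimit cone :=
    { lift := fun s => kernel.lift g (s.π.app c) (by
        rw [hg, Preadditive.comp_sub, sub_eq_zero,
          s.w (coprod.inl : c ⟶ c ⨿ c), s.w (coprod.inr : c ⟶ c ⨿ c)])
      fac := by
        intro s d
        rw [hπ d, ← Category.assoc, kernel.lift_ι, s.w (f d)]
      uniq := by
        intro s m hm
        apply (cancel_mono (kernel.ι g)).mp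
        rw [kernel.lift_ι, ← hπc]
        exact hm c }
  exact ⟨(limit.isLimit F).conePointUniqueUpToIso hlim⟩
end

section
/- Let C be a strongly connected category with pairwise coproducts and F : C → Ab a functor. Then the kernel of the natural map T : F(c) ⊕ F(c) → F(c ⊔ c) (induced by the two coproduct inclusions) equals {(x, −x) : x ∈ lim F}, where lim F is identified with the subgroup of invariant elements of F(c). -/
open CategoryTheory CategoryTheory.Limits

/-- For a strongly connected category `C` with pairwise coproducts and
`F : C ⥤ Ab`, the kernel of `T : F(c) ⊕ F(c) → F(c ⊔ c)`, `T(x,y) = F(i₁)(x) + F(i₂)(y)`,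
is exactly `{(x, -x) : x ∈ lim F}`, where `lim F` is identified with the subgroup of
invariant elements `{x ∈ F(c) : F(f₁)(x) = F(f₂)(x) for all parallel pairs f₁ f₂}`. -/
theorem ker_T_eq_antidiagonal_of_limit
    (C : Type) [SmallCategory C]
    (hconn : ∀ c c' : C, Nonempty (c ⟶ c'))
    [HasBinaryCoproducts C]
    (F : C ⥤ AddCommGrpCat) (c : C) :
    ∀ p : F.obj c × F.obj c,
      (F.map (coprod.inl : c ⟶ c ⨿ c) p.1 + F.map (coprod.inr : c ⟶ c ⨿ c) p.2 = 0) ↔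
        (p.2 = -p.1 ∧ ∀ (c' : C) (f₁ f₂ : c ⟶ c'), F.map f₁ p.1 = F.map f₂ p.1) := by
  intro p
  constructor
  · intro h
    have key : ∀ (c' : C) (f₁ f₂ : c ⟶ c'),
        F.map f₁ p.1 + F.map f₂ p.2 = 0 := by
      intro c' f₁ f₂
      have h2 := congrArg (F.map (coprod.desc f₁ f₂)) h
      rw [map_add, map_zero] at h2
      rw [← CategoryTheory.comp_apply, ← CategoryTheory.comp_apply,
        ← F.map_comp, ← F.map_comp, coprod.inl_desc, coprod.inr_desc] at h2
      exact h2
    have hsum := key c (𝟙 c) (𝟙 c)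
    simp only [F.map_id] at hsum
    have hp2 : p.2 = -p.1 := by
      have : (p.1 : F.obj c) + p.2 = 0 := hsum
      linear_combination (norm := abel) this
    refine ⟨hp2, fun c' f₁ f₂ => ?_⟩
    have := key c' f₁ f₂
    rw [hp2, map_neg] at this
    linear_combination (norm := abel) this
  · rintro ⟨hp2, hinv⟩
    rw [hp2, map_neg, hinv _ (coprod.inl : c ⟶ c ⨿ c) (coprod.inr : c ⟶ c ⨿ c)]
    abel
end

section
/- Let C be a strongly connected category with pairwise coproducts and F : C → Ab a functor. Then F is monoadditive (i.e., the map T : F(c₁) ⊕ F(c₂) → F(c₁ ⊔ c₂) is injective for all pairs of objects c₁, c₂) if and only if lim F = 0. -/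
open CategoryTheory CategoryTheory.Limits

/-- Key computation: if `F(inl)a₁ + F(inr)a₂ = 0` then for any `f : c₁ ⟶ d` and
`g : c₂ ⟶ d` we have `F(f)a₁ = -F(g)a₂`. -/
lemma monoadd_key {C : Type} [SmallCategory C] [HasBinaryCoproducts C]
    (F : C ⥤ AddCommGrpCat) {c₁ c₂ : C} {a₁ : F.obj c₁} {a₂ : F.obj c₂}
    (h : F.map (coprod.inl : c₁ ⟶ c₁ ⨿ c₂) a₁ + F.map (coprod.inr : c₂ ⟶ c₁ ⨿ c₂) a₂ = 0)
    {d : C} (f : c₁ ⟶ d) (g : c₂ ⟶ d) :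
    F.map f a₁ = - F.map g a₂ := by
  have h2 := congrArg (F.map (coprod.desc f g)) h
  rw [map_add, map_zero] at h2
  have e1 : F.map (coprod.desc f g) (F.map (coprod.inl : c₁ ⟶ c₁ ⨿ c₂) a₁) = F.map f a₁ := by
    rw [← CategoryTheory.comp_apply, ← F.map_comp, coprod.inl_desc]
  have e2 : F.map (coprod.desc f g) (F.map (coprod.inr : c₂ ⟶ c₁ ⨿ c₂) a₂) = F.map g a₂ := by
    rw [← CategoryTheory.comp_apply, ← F.map_comp, coprod.inr_desc]
  rw [e1, e2] at h2
  exact eq_neg_of_add_eq_zero_left h2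

/-- For a strongly connected category `C` with pairwise coproducts and
`F : C ⥤ Ab`, the functor `F` is monoadditive (all maps `T : F(c₁) ⊕ F(c₂) → F(c₁ ⊔ c₂)`
are injective) if and only if `lim F = 0`. -/
theorem monoadditive_iff_limit_eq_zero
    (C : Type) [SmallCategory C]
    (hconn : ∀ c c' : C, Nonempty (c ⟶ c'))
    [HasBinaryCoproducts C]
    (F : C ⥤ AddCommGrpCat) :
    (∀ c₁ c₂ : C, Function.Injective
        (fun p : F.obj c₁ × F.obj c₂ =>
          F.map (coprod.inl : c₁ ⟶ c₁ ⨿ c₂) p.1 + F.map (coprod.inr : c₂ ⟶ c₁ ⨿ c₂) p.2)) ↔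
      Subsingleton (limit F : AddCommGrpCat) := by
  constructor
  · -- monoadditive → limit is zero
    intro hT
    refine ⟨fun x y => ?_⟩
    refine Concrete.limit_ext F x y fun c => ?_
    have wl : ∀ z : (limit F : AddCommGrpCat),
        F.map (coprod.inl : c ⟶ c ⨿ c) (limit.π F c z) = limit.π F (c ⨿ c) z := fun z => by
      rw [← CategoryTheory.comp_apply, limit.w]
    have wr : ∀ z : (limit F : AddCommGrpCat),
        F.map (coprod.inr : c ⟶ c ⨿ c) (limit.π F c z) = limit.π F (c ⨿ c) z := fun z => by
      rw [← CategoryTheory.comp_apply, limit.w]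
    set a : F.obj c := limit.π F c x - limit.π F c y with ha
    have h0 : F.map (coprod.inl : c ⟶ c ⨿ c) a + F.map (coprod.inr : c ⟶ c ⨿ c) (-a) = 0 := by
      rw [map_neg, ha, map_sub, map_sub, wl x, wl y, wr x, wr y]
      abel
    have h2 : (a, -a) = ((0 : F.obj c), (0 : F.obj c)) := hT c c (by simpa using h0)
    have h3 : a = 0 := congrArg Prod.fst h2
    exact sub_eq_zero.mp h3
  · -- limit zero → monoadditive
    intro hS c₁ c₂ p q hpq
    simp only at hpq
    have h0 : F.map (coprod.inl : c₁ ⟶ c₁ ⨿ c₂) (p.1 - q.1) +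
        F.map (coprod.inr : c₂ ⟶ c₁ ⨿ c₂) (p.2 - q.2) = 0 := by
      rw [map_sub, map_sub, sub_add_sub_comm, hpq, sub_self]
    set a₁ := p.1 - q.1 with ha₁
    set a₂ := p.2 - q.2 with ha₂
    let x : ∀ d : C, F.obj d := fun d => F.map (hconn c₁ d).some a₁
    have indep : ∀ (d : C) (f : c₁ ⟶ d), F.map f a₁ = x d := by
      intro d f
      rw [monoadd_key F h0 f (hconn c₂ d).some]
      exact (monoadd_key F h0 (hconn c₁ d).some (hconn c₂ d).some).symm
    let s : Cone F :=
      { pt := AddCommGrpCat.of ℤ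
        π := { app := fun d => AddCommGrpCat.asHom (x d)
               naturality := by
                 intro d d' h
                 simp only [Functor.const_obj_map, Category.id_comp]
                 apply AddCommGrpCat.int_hom_ext
                 show (1 : ℤ) • x d' = F.map h ((1 : ℤ) • x d)
                 rw [one_zsmul, one_zsmul, ← indep d' ((hconn c₁ d).some ≫ h),
                   F.map_comp]
                 rfl } }
    have hz : ∀ d : C, x d = 0 := by
      intro d
      have ht : (limit.lift F s) (1 : ℤ) = (0 : (limit F : AddCommGrpCat)) :=
        Subsingleton.elim _ _
      have h : (limit.π F d) ((limit.lift F s) (1 : ℤ)) = s.π.app d (1 : ℤ) := by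
        rw [← CategoryTheory.comp_apply, limit.lift_π]
      rw [ht, map_zero] at h
      have h' : s.π.app d (1 : ℤ) = x d := one_zsmul (x d)
      rw [h'] at h
      exact h.symm
    have hha1 : a₁ = 0 := by
      have h := indep c₁ (𝟙 c₁)
      rw [F.map_id, hz c₁] at h
      simpa using h
    have hha2 : a₂ = 0 := by
      have h := monoadd_key F h0 (hconn c₁ c₂).some (𝟙 c₂)
      rw [F.map_id] at h
      have h' : x c₂ = - ((𝟙 (F.obj c₂) : F.obj c₂ ⟶ F.obj c₂) a₂) := h
      rw [hz c₂] at h'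
      have : -a₂ = 0 := by simpa using h'.symm
      simpa using this
    have e1 : p.1 = q.1 := sub_eq_zero.mp hha1
    have e2 : p.2 = q.2 := sub_eq_zero.mp hha2
    exact Prod.ext e1 e2
end

section
/- For any abelian group A, there is a short exact sequence 0 → A ⊗ ℤ/2 → ⊗̃²(A) → Λ²(A) → 0, where the left map sends the class of a to the class of a ⊗ a. -/
open TensorProduct

/-- The antisymmetric square `⊗̃²(A)`: the quotient of `A ⊗ A` by the subgroup generated by
all elements `a ⊗ b + b ⊗ a`. -/
noncomputable def antisymRel (A : Type) [AddCommGroup A] : Submodule ℤ (A ⊗[ℤ] A) :=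
  Submodule.span ℤ {x | ∃ a b : A, x = a ⊗ₜ[ℤ] b + b ⊗ₜ[ℤ] a}

noncomputable abbrev AntisymSq (A : Type) [AddCommGroup A] :=
  (A ⊗[ℤ] A) ⧸ antisymRel A

/-- The exterior square `Λ²(A)`: the quotient of `A ⊗ A` by the subgroup generated by all
elements `a ⊗ a`. -/
noncomputable def extRel (A : Type) [AddCommGroup A] : Submodule ℤ (A ⊗[ℤ] A) :=
  Submodule.span ℤ {x | ∃ a : A, x = a ⊗ₜ[ℤ] a}

noncomputable abbrev ExtSq (A : Type) [AddCommGroup A] :=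
  (A ⊗[ℤ] A) ⧸ extRel A

section Aux

variable (A : Type) [AddCommGroup A]

lemma sq_mem_extRel (a : A) : a ⊗ₜ[ℤ] a ∈ extRel A :=
  Submodule.subset_span ⟨a, rfl⟩

lemma antisym_mem (a b : A) : a ⊗ₜ[ℤ] b + b ⊗ₜ[ℤ] a ∈ antisymRel A :=
  Submodule.subset_span ⟨a, b, rfl⟩

lemma antisymRel_le_extRel : antisymRel A ≤ extRel A := by
  rw [antisymRel, Submodule.span_le]
  rintro x ⟨a, b, rfl⟩
  have h : a ⊗ₜ[ℤ] b + b ⊗ₜ[ℤ] a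
      = (a + b) ⊗ₜ[ℤ] (a + b) - a ⊗ₜ[ℤ] a - b ⊗ₜ[ℤ] b := by
    simp only [TensorProduct.tmul_add, TensorProduct.add_tmul]
    abel
  rw [SetLike.mem_coe, h]
  exact Submodule.sub_mem _
    (Submodule.sub_mem _ (sq_mem_extRel A _) (sq_mem_extRel A a)) (sq_mem_extRel A b)

/-- The diagonal additive map `a ↦ [a ⊗ a]` into the antisymmetric square. -/
noncomputable def dmap : A →+ AntisymSq A where
  toFun a := Submodule.Quotient.mk (a ⊗ₜ[ℤ] a)
  map_zero' := by simp
  map_add' a b := by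
    rw [← Submodule.Quotient.mk_add, Submodule.Quotient.eq]
    have h : (a + b) ⊗ₜ[ℤ] (a + b) - (a ⊗ₜ[ℤ] a + b ⊗ₜ[ℤ] b)
        = a ⊗ₜ[ℤ] b + b ⊗ₜ[ℤ] a := by
      simp only [TensorProduct.tmul_add, TensorProduct.add_tmul]
      abel
    rw [h]
    exact antisym_mem A a b

lemma dmap_add_self (a : A) : dmap A a + dmap A a = 0 := by
  show Submodule.Quotient.mk (a ⊗ₜ[ℤ] a) + Submodule.Quotient.mk (a ⊗ₜ[ℤ] a)
      = (0 : AntisymSq A)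
  rw [← Submodule.Quotient.mk_add, Submodule.Quotient.mk_eq_zero]
  exact antisym_mem A a a

lemma key_zsmul {M : Type} [AddCommGroup M] (x : M) (hx : x + x = 0) (k : ℤ) :
    k • x = ZMod.val ((k : ZMod 2)) • x := by
  obtain ⟨m, rfl | rfl⟩ := Int.even_or_odd' k
  · have h2 : (((2 * m : ℤ)) : ZMod 2) = 0 := by
      push_cast
      rw [show (2 : ZMod 2) = 0 from rfl, zero_mul]
    rw [h2, ZMod.val_zero, zero_smul, mul_comm, mul_smul, two_smul, hx, smul_zero]
  · have h2 : (((2 * m + 1 : ℤ)) : ZMod 2) = 1 := by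
      push_cast
      rw [show (2 : ZMod 2) = 0 from rfl, zero_mul, zero_add]
    rw [h2, show ZMod.val (1 : ZMod 2) = 1 from rfl, one_smul,
      add_smul, mul_comm, mul_smul, two_smul, hx, smul_zero, zero_add, one_smul]

lemma zmod2_cases' : ∀ c : ZMod 2, c = 0 ∨ c = 1 := by decide

lemma zmod2_cases (c : ZMod 2) : c = 0 ∨ c = 1 := zmod2_cases' c

/-- The bilinear map `(a, c) ↦ c • [a ⊗ a]`. -/
noncomputable def iotaBil : A →ₗ[ℤ] ZMod 2 →ₗ[ℤ] AntisymSq A :=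
  LinearMap.mk₂ ℤ (fun a c => ZMod.val c • dmap A a)
    (fun a a' c => by rw [map_add, smul_add])
    (fun k a c => by rw [map_zsmul, smul_comm])
    (fun a c c' => by
      rcases zmod2_cases c with rfl | rfl <;> rcases zmod2_cases c' with rfl | rfl
      · simp
      · simp
      · simp
      · rw [show (1 + 1 : ZMod 2) = 0 from rfl, ZMod.val_zero, zero_smul,
          show ZMod.val (1 : ZMod 2) = 1 from rfl, one_smul, eq_comm]
        exact dmap_add_self A a)
    (fun k a c => by
      rcases zmod2_cases c with rfl | rfl
      · simp
      · rw [show k • (1 : ZMod 2) = ((k : ZMod 2)) from by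
            rw [zsmul_eq_mul, mul_one],
          show ZMod.val (1 : ZMod 2) = 1 from rfl, one_smul,
          ← key_zsmul (dmap A a) (dmap_add_self A a) k])

noncomputable def iotaMap : (A ⊗[ℤ] ZMod 2) →ₗ[ℤ] AntisymSq A :=
  TensorProduct.lift (iotaBil A)

lemma iotaMap_tmul_one (a : A) :
    iotaMap A (a ⊗ₜ[ℤ] (1 : ZMod 2)) = Submodule.Quotient.mk (a ⊗ₜ[ℤ] a) := by
  show ZMod.val (1 : ZMod 2) • dmap A a = _
  rw [show ZMod.val (1 : ZMod 2) = 1 from rfl, one_smul]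
  rfl

lemma exists_tmul_one (x : A ⊗[ℤ] ZMod 2) : ∃ a : A, x = a ⊗ₜ[ℤ] (1 : ZMod 2) := by
  induction x using TensorProduct.induction_on with
  | zero => exact ⟨0, by simp⟩
  | tmul a c =>
      rcases zmod2_cases c with rfl | rfl
      · exact ⟨0, by simp⟩
      · exact ⟨a, rfl⟩
  | add x y hx hy =>
      obtain ⟨a, rfl⟩ := hx
      obtain ⟨b, rfl⟩ := hy
      exact ⟨a + b, by rw [TensorProduct.add_tmul]⟩

lemma iotaMap_injective : Function.Injective (iotaMap A) := by
  have key : ∀ x : A ⊗[ℤ] ZMod 2, iotaMap A x = 0 → x = 0 := by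
    intro x hx
    obtain ⟨a, rfl⟩ := exists_tmul_one A x
    rw [iotaMap_tmul_one, Submodule.Quotient.mk_eq_zero] at hx
    -- now `a ⊗ₜ a ∈ antisymRel A`; show `a ⊗ₜ 1 = 0` using duals over `ZMod 2`
    haveI : Fact (Nat.Prime 2) := ⟨Nat.prime_two⟩
    have h2 : ∀ v : A ⊗[ℤ] ZMod 2, (2 : ℕ) • v = 0 := by
      intro v
      induction v using TensorProduct.induction_on with
      | zero => simp
      | tmul a c =>
          have hc : ((2 : ℕ) • c : ZMod 2) = 0 := by
            rcases zmod2_cases c with rfl | rfl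
            · rw [smul_zero]
            · rw [two_nsmul]; rfl
          rw [← tmul_smul, hc, tmul_zero]
      | add x y hxx hyy => rw [smul_add, hxx, hyy, add_zero]
    letI : Module (ZMod 2) (A ⊗[ℤ] ZMod 2) := AddCommGroup.zmodModule h2
    haveI hfree : Module.Free (ZMod 2) (A ⊗[ℤ] ZMod 2) :=
      Module.Free.of_basis (Module.Basis.ofVectorSpace (ZMod 2) (A ⊗[ℤ] ZMod 2))
    haveI : Module.Projective (ZMod 2) (A ⊗[ℤ] ZMod 2) := Module.Projective.of_free
    rw [← Module.forall_dual_apply_eq_zero_iff (ZMod 2)]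
    intro φ
    -- the ℤ-linear map `x ↦ φ (x ⊗ 1)`
    let g : A →ₗ[ℤ] ZMod 2 :=
      { toFun := fun x => φ (x ⊗ₜ[ℤ] (1 : ZMod 2))
        map_add' := fun x y => by rw [TensorProduct.add_tmul, map_add]
        map_smul' := fun k x => by
          rw [← TensorProduct.smul_tmul', RingHom.id_apply]
          exact map_zsmul φ.toAddMonoidHom k _ }
    -- the symmetric bilinear form `(x, y) ↦ g x * g y`
    let F2 : A →ₗ[ℤ] A →ₗ[ℤ] ZMod 2 :=
      LinearMap.mk₂ ℤ (fun x y => g x * g y)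
        (fun x x' y => by rw [map_add, add_mul])
        (fun k x y => by rw [map_smul, smul_mul_assoc])
        (fun x y y' => by rw [map_add, mul_add])
        (fun k x y => by rw [map_smul, mul_smul_comm])
    let F : (A ⊗[ℤ] A) →ₗ[ℤ] ZMod 2 := TensorProduct.lift F2
    have hker : antisymRel A ≤ LinearMap.ker F := by
      rw [antisymRel, Submodule.span_le]
      rintro x ⟨u, v, rfl⟩
      rw [SetLike.mem_coe, LinearMap.mem_ker, map_add]
      show g u * g v + g v * g u = 0
      rw [mul_comm (g v) (g u)]
      exact CharTwo.add_self_eq_zero _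
    have hFaa : F (a ⊗ₜ[ℤ] a) = 0 := hker hx
    have : g a * g a = 0 := hFaa
    have hsq : ∀ z : ZMod 2, z * z = z := by
      intro z; rcases zmod2_cases z with rfl | rfl <;> rfl
    rw [hsq (g a)] at this
    exact this
  intro x y hxy
  have : x - y = 0 := key (x - y) (by rw [map_sub, hxy, sub_self])
  exact sub_eq_zero.mp this

end Aux

/-- For any abelian group `A` there is a short exact sequence
`0 → A ⊗ ℤ/2 → ⊗̃²(A) → Λ²(A) → 0`, where the left map sends (the class of) `a` to the class
of `a ⊗ a` and the right map is the natural quotient map. -/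
theorem antisym_sq_ses (A : Type) [AddCommGroup A] :
    ∃ (ι : (A ⊗[ℤ] ZMod 2) →ₗ[ℤ] AntisymSq A) (π : AntisymSq A →ₗ[ℤ] ExtSq A),
      (∀ a : A, ι (a ⊗ₜ[ℤ] (1 : ZMod 2)) = Submodule.Quotient.mk (a ⊗ₜ[ℤ] a)) ∧
      (∀ x : A ⊗[ℤ] A,
        π (Submodule.Quotient.mk x) = (Submodule.Quotient.mk x : ExtSq A)) ∧
      Function.Injective ι ∧
      Function.Surjective π ∧
      LinearMap.range ι = LinearMap.ker π := by
  refine ⟨iotaMap A,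
    Submodule.mapQ (antisymRel A) (extRel A) LinearMap.id
      (by rw [Submodule.comap_id]; exact antisymRel_le_extRel A),
    iotaMap_tmul_one A, ?_, iotaMap_injective A, ?_, ?_⟩
  · intro x
    rw [Submodule.mapQ_apply, LinearMap.id_apply]
  · intro y
    obtain ⟨x, rfl⟩ := Submodule.Quotient.mk_surjective _ y
    exact ⟨Submodule.Quotient.mk x, by rw [Submodule.mapQ_apply, LinearMap.id_apply]⟩
  · apply le_antisymm
    · rintro _ ⟨v, rfl⟩
      obtain ⟨a, rfl⟩ := exists_tmul_one A v
      rw [LinearMap.mem_ker, iotaMap_tmul_one, Submodule.mapQ_apply, LinearMap.id_apply,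
        Submodule.Quotient.mk_eq_zero]
      exact sq_mem_extRel A a
    · intro z hz
      obtain ⟨y, rfl⟩ := Submodule.Quotient.mk_surjective _ z
      rw [LinearMap.mem_ker, Submodule.mapQ_apply, LinearMap.id_apply,
        Submodule.Quotient.mk_eq_zero] at hz
      have hmap : Submodule.map (antisymRel A).mkQ (extRel A) ≤ LinearMap.range (iotaMap A) := by
        rw [extRel, Submodule.map_span, Submodule.span_le]
        rintro _ ⟨_, ⟨a, rfl⟩, rfl⟩
        exact ⟨a ⊗ₜ[ℤ] (1 : ZMod 2), by rw [iotaMap_tmul_one]; rfl⟩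
      exact hmap ⟨y, hz, rfl⟩
end

section
/- Let F be a free group and R a normal subgroup of F. Then γ₂(R) ∩ γ₃(F) = [R ∩ γ₂(F), R]. -/
open Subgroup
open scoped commutatorElement IsMulCommutative

namespace Gamma23Aux

/-! ### A rational Heisenberg group -/

structure Heis : Type where
  a : ℚ
  b : ℚ
  c : ℚ

namespace Heis

instance : Mul Heis := ⟨fun x y => ⟨x.a + y.a, x.b + y.b, x.c + y.c + x.a * y.b⟩⟩
instance : One Heis := ⟨⟨0, 0, 0⟩⟩
instance : Inv Heis := ⟨fun x => ⟨-x.a, -x.b, -x.c + x.a * x.b⟩⟩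

lemma mul_def (x y : Heis) :
    x * y = ⟨x.a + y.a, x.b + y.b, x.c + y.c + x.a * y.b⟩ := rfl
lemma one_def : (1 : Heis) = ⟨0, 0, 0⟩ := rfl
lemma inv_def (x : Heis) : x⁻¹ = ⟨-x.a, -x.b, -x.c + x.a * x.b⟩ := rfl

instance : Group Heis where
  mul_assoc x y z := by
    simp only [mul_def, mk.injEq]
    refine ⟨by ring, by ring, by ring⟩
  one_mul x := by cases x; simp only [mul_def, one_def]; norm_num
  mul_one x := by cases x; simp only [mul_def, one_def]; norm_num
  inv_mul_cancel x := by
    simp only [mul_def, inv_def, one_def, mk.injEq]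
    refine ⟨by ring, by ring, by ring⟩

lemma commutator_eq (x y : Heis) : ⁅x, y⁆ = ⟨0, 0, x.a * y.b - y.a * x.b⟩ := by
  simp only [commutatorElement_def, mul_def, inv_def, mk.injEq]
  refine ⟨by ring, by ring, by ring⟩

lemma mem_center (t : ℚ) : (⟨0, 0, t⟩ : Heis) ∈ Subgroup.center Heis := by
  rw [Subgroup.mem_center_iff]
  intro g
  simp only [mul_def, mk.injEq]
  refine ⟨by ring, by ring, by ring⟩

lemma lcs_two : (⊤ : Subgroup Heis).lowerCentralSeries 2 = ⊥ := by
  have h1 : (⊤ : Subgroup Heis).lowerCentralSeries 1 ≤ Subgroup.center Heis := by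
    rw [top_lowerCentralSeries_one, commutator_eq_closure, Subgroup.closure_le]
    rintro g ⟨x, y, rfl⟩
    rw [commutator_eq]
    exact mem_center _
  exact Subgroup.lowerCentralSeries_succ_eq_bot ⊤ h1

/-- First coordinate, as a homomorphism. -/
def prA : Heis →* Multiplicative ℚ :=
  MonoidHom.mk' (fun x => Multiplicative.ofAdd x.a) (fun x y => rfl)

/-- Second coordinate, as a homomorphism. -/
def prB : Heis →* Multiplicative ℚ :=
  MonoidHom.mk' (fun x => Multiplicative.ofAdd x.b) (fun x y => rfl)

end Heis

/-! ### The abelianization map of the free group -/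

variable {α : Type}

/-- The canonical map from the free group to the free abelian group `α →₀ ℤ`. -/
noncomputable def pim : FreeGroup α →* Multiplicative (α →₀ ℤ) :=
  FreeGroup.lift fun a => Multiplicative.ofAdd (Finsupp.single a 1)

lemma pim_of (a : α) : pim (FreeGroup.of a) = Multiplicative.ofAdd (Finsupp.single a 1) :=
  FreeGroup.lift_apply_of

/-- Section of `pim` into the abelianization. -/
noncomputable def sigmaAb : Multiplicative (α →₀ ℤ) →* Abelianization (FreeGroup α) :=
  AddMonoidHom.toMultiplicativeLeft
    (Finsupp.liftAddHom fun a =>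
      zmultiplesHom _ (Additive.ofMul (Abelianization.of (FreeGroup.of a))))

lemma pim_eq_one_iff (w : FreeGroup α) :
    pim w = 1 ↔ w ∈ (⊤ : Subgroup (FreeGroup α)).lowerCentralSeries 1 := by
  rw [top_lowerCentralSeries_one]
  constructor
  · intro h
    have hcomp : (sigmaAb (α := α)).comp pim = Abelianization.of := by
      apply FreeGroup.ext_hom
      intro a
      simp only [MonoidHom.comp_apply, pim_of, sigmaAb,
        AddMonoidHom.coe_toMultiplicativeLeft, Function.comp_apply]
      rw [show Multiplicative.toAdd (Multiplicative.ofAdd (Finsupp.single a (1 : ℤ)))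
            = Finsupp.single a 1 from rfl]
      rw [Finsupp.liftAddHom_apply_single]
      simp
    have h2 : Abelianization.of w = 1 := by
      rw [← hcomp, MonoidHom.comp_apply, h, map_one]
    exact (QuotientGroup.eq_one_iff w).mp h2
  · intro h
    exact Abelianization.commutator_subset_ker pim h

/-- Coercion `(α →₀ ℤ) → (α →₀ ℚ)`. -/
noncomputable def jQ : (α →₀ ℤ) →ₗ[ℤ] (α →₀ ℚ) :=
  Finsupp.mapRange.linearMap (AddMonoidHom.toIntLinearMap (Int.castAddHom ℚ))

lemma jQ_apply (m : α →₀ ℤ) (a : α) : jQ m a = (m a : ℚ) := rfl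

lemma jQ_inj : Function.Injective (jQ (α := α)) := by
  intro x y h
  ext a
  have := DFunLike.congr_fun h a
  rw [jQ_apply, jQ_apply] at this
  exact_mod_cast this

/-- The two-functional Heisenberg representation of the free group. -/
noncomputable def phi (f g : (α →₀ ℚ) →ₗ[ℚ] ℚ) : FreeGroup α →* Heis :=
  FreeGroup.lift fun a => ⟨f (jQ (Finsupp.single a 1)), g (jQ (Finsupp.single a 1)), 0⟩

lemma phi_a (f g : (α →₀ ℚ) →ₗ[ℚ] ℚ) (w : FreeGroup α) :
    (phi f g w).a = f (jQ (Multiplicative.toAdd (pim w))) := by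
  have hcomp : Heis.prA.comp (phi f g) =
      (AddMonoidHom.toMultiplicative ((f.toAddMonoidHom.comp jQ.toAddMonoidHom))).comp pim := by
    apply FreeGroup.ext_hom
    intro a
    simp [phi, Heis.prA, pim_of, FreeGroup.lift_apply_of, Heis.mul_def]
  have := congrArg (fun h : FreeGroup α →* Multiplicative ℚ => Multiplicative.toAdd (h w)) hcomp
  simpa [Heis.prA] using this

lemma phi_b (f g : (α →₀ ℚ) →ₗ[ℚ] ℚ) (w : FreeGroup α) :
    (phi f g w).b = g (jQ (Multiplicative.toAdd (pim w))) := by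
  have hcomp : Heis.prB.comp (phi f g) =
      (AddMonoidHom.toMultiplicative ((g.toAddMonoidHom.comp jQ.toAddMonoidHom))).comp pim := by
    apply FreeGroup.ext_hom
    intro a
    simp [phi, Heis.prB, pim_of, FreeGroup.lift_apply_of, Heis.mul_def]
  have := congrArg (fun h : FreeGroup α →* Multiplicative ℚ => Multiplicative.toAdd (h w)) hcomp
  simpa [Heis.prB] using this

lemma phi_lcs2 (f g : (α →₀ ℚ) →ₗ[ℚ] ℚ) {w : FreeGroup α}
    (hw : w ∈ (⊤ : Subgroup (FreeGroup α)).lowerCentralSeries 2) : phi f g w = 1 := by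
  have h := lowerCentralSeries.map (phi f g) 2 (Subgroup.mem_map_of_mem _ hw)
  rw [Heis.lcs_two, Subgroup.mem_bot] at h
  exact h

/-! ### Generic helper lemmas -/

lemma comm_list {G : Type*} [Group G] (R : Subgroup G) {x : G} (hx : x ∈ ⁅R, R⁆) :
    ∃ L : List (G × G), (∀ p ∈ L, p.1 ∈ R ∧ p.2 ∈ R) ∧
      (L.map fun p => ⁅p.1, p.2⁆).prod = x := by
  have hx' : x ∈ Submonoid.closure
      ({g | ∃ g₁ ∈ R, ∃ g₂ ∈ R, ⁅g₁, g₂⁆ = g} ∪ {g | ∃ g₁ ∈ R, ∃ g₂ ∈ R, ⁅g₁, g₂⁆ = g}⁻¹) := by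
    rw [← Subgroup.closure_toSubmonoid]
    exact hx
  obtain ⟨l, hl, rfl⟩ := Submonoid.exists_list_of_mem_closure hx'
  clear hx hx'
  induction l with
  | nil => exact ⟨[], by simp, by simp⟩
  | cons hd tl ih =>
    obtain ⟨L, hL, hLp⟩ := ih fun y hy => hl y (List.mem_cons_of_mem _ hy)
    have hhd := hl hd List.mem_cons_self
    have : ∃ u v, u ∈ R ∧ v ∈ R ∧ hd = ⁅u, v⁆ := by
      rcases hhd with ⟨u, hu, v, hv, h⟩ | h
      · exact ⟨u, v, hu, hv, h.symm⟩
      · rw [Set.mem_inv] at h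
        obtain ⟨u, hu, v, hv, h⟩ := h
        exact ⟨v, u, hv, hu, by rw [← inv_inv hd, ← h, commutatorElement_inv]⟩
    obtain ⟨u, v, hu, hv, rfl⟩ := this
    refine ⟨(u, v) :: L, ?_, ?_⟩
    · intro p hp
      rcases List.mem_cons.mp hp with rfl | hp
      · exact ⟨hu, hv⟩
      · exact hL p hp
    · simp [hLp]

lemma list_expand {C : Type*} [CommGroup C] {σ β : Type*} (s : Finset σ) (z : σ → C)
    (L : List β) (e : β → σ → ℤ) :
    (L.map fun p => ∏ i ∈ s, z i ^ e p i).prod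
      = ∏ i ∈ s, z i ^ ((L.map fun p => e p i).sum) := by
  induction L with
  | nil => simp
  | cons hd tl ih =>
    simp only [List.map_cons, List.prod_cons, ih, List.sum_cons, zpow_add]
    rw [Finset.prod_mul_distrib]

lemma toAdd_list_prod {M : Type*} [AddMonoid M] (l : List (Multiplicative M)) :
    Multiplicative.toAdd l.prod = (l.map Multiplicative.toAdd).sum := by
  induction l with
  | nil => rfl
  | cons hd tl ih => simp [ih]

/-- The image of `R` in `α →₀ ℤ`, as a `ℤ`-submodule. -/
noncomputable def pimR (R : Subgroup (FreeGroup α)) : Submodule ℤ (α →₀ ℤ) where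
  carrier := {m | ∃ u ∈ R, Multiplicative.toAdd (pim u) = m}
  zero_mem' := ⟨1, R.one_mem, by simp⟩
  add_mem' := by
    rintro m₁ m₂ ⟨u, hu, rfl⟩ ⟨v, hv, rfl⟩
    exact ⟨u * v, R.mul_mem hu hv, by simp⟩
  smul_mem' := by
    rintro z m ⟨u, hu, rfl⟩
    exact ⟨u ^ z, R.zpow_mem hu z, by simp⟩

end Gamma23Aux

open Gamma23Aux

/-- For a free group `F` and a normal subgroup `R` of `F`,
`γ₂(R) ∩ γ₃(F) = [R ∩ γ₂(F), R]`.  Here `γ₂(R) = [R, R]`, `γ₃(F)` is the third term of the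
lower central series of `F` (`lowerCentralSeries F 2` in Mathlib's indexing, which starts at
`γ₁ = lowerCentralSeries F 0 = ⊤`). -/
theorem gamma2_inter_gamma3_eq_commutator
    (α : Type) (R : Subgroup (FreeGroup α)) [R.Normal] :
    ⁅R, R⁆ ⊓ (⊤ : Subgroup (FreeGroup α)).lowerCentralSeries 2 =
      ⁅R ⊓ (⊤ : Subgroup (FreeGroup α)).lowerCentralSeries 1, R⁆ := by
  classical
  set K : Subgroup (FreeGroup α) := (⊤ : Subgroup (FreeGroup α)).lowerCentralSeries 1 with hK
  set N : Subgroup (FreeGroup α) := ⁅R ⊓ K, R⁆ with hN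
  have hKcomm : K = commutator (FreeGroup α) := by rw [hK, top_lowerCentralSeries_one]
  have hRR_R : ⁅R, R⁆ ≤ R := Subgroup.commutator_le_left R R
  have hRR_K : ⁅R, R⁆ ≤ K := by
    rw [hKcomm, commutator_def]
    exact Subgroup.commutator_mono le_top le_top
  have hRRle : ⁅R, R⁆ ≤ R ⊓ K := le_inf hRR_R hRR_K
  have hlcs2 : (⊤ : Subgroup (FreeGroup α)).lowerCentralSeries 2 =
      ⁅K, (⊤ : Subgroup (FreeGroup α))⁆ := rfl
  have hNle2 : N ≤ (⊤ : Subgroup (FreeGroup α)).lowerCentralSeries 2 := by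
    rw [hlcs2, hN]
    exact Subgroup.commutator_mono inf_le_right le_top
  -- the easy inclusion
  apply le_antisymm
  swap
  · exact le_inf (Subgroup.commutator_mono inf_le_left le_rfl) hNle2
  rintro x hx
  obtain ⟨hxRR, hxγ3⟩ := hx
  show x ∈ N
  -- the quotient map
  set q : FreeGroup α →* FreeGroup α ⧸ N := QuotientGroup.mk' N with hq
  have hqone : ∀ g ∈ N, q g = 1 := fun g hg => (QuotientGroup.eq_one_iff g).mpr hg
  have hN_RRR : ⁅(⁅R, R⁆ : Subgroup (FreeGroup α)), R⁆ ≤ N := by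
    rw [hN]; exact Subgroup.commutator_mono hRRle le_rfl
  have hN_RRRR : ⁅(⁅R, R⁆ : Subgroup (FreeGroup α)), ⁅R, R⁆⁆ ≤ N := by
    rw [hN]; exact Subgroup.commutator_mono hRRle hRR_R
  -- the image of [R,R] in the quotient, a commutative subgroup
  set Z : Subgroup (FreeGroup α ⧸ N) := Subgroup.map q ⁅R, R⁆ with hZ
  haveI hZcomm : IsMulCommutative Z := by
    constructor
    constructor
    rintro ⟨z₁, hz₁⟩ ⟨z₂, hz₂⟩
    obtain ⟨g₁, hg₁, rfl⟩ := hz₁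
    obtain ⟨g₂, hg₂, rfl⟩ := hz₂
    apply Subtype.ext
    show q g₁ * q g₂ = q g₂ * q g₁
    rw [← commutatorElement_eq_one_iff_mul_comm, ← map_commutatorElement]
    exact hqone _ (hN_RRRR (Subgroup.commutator_mem_commutator hg₁ hg₂))
  -- the basic bilinear map into Z
  set zet : FreeGroup α → FreeGroup α → ↥Z := fun u v =>
    if h : u ∈ R ∧ v ∈ R then
      ⟨q ⁅u, v⁆, Subgroup.mem_map_of_mem _ (Subgroup.commutator_mem_commutator h.1 h.2)⟩
    else 1 with hzet
  have zet_val : ∀ u v : FreeGroup α, u ∈ R → v ∈ R → (zet u v : FreeGroup α ⧸ N) = q ⁅u, v⁆ := by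
    intro u v hu hv
    rw [hzet]
    simp only [dif_pos (And.intro hu hv)]
  have zet_inv_rev : ∀ u v : FreeGroup α, u ∈ R → v ∈ R → zet u v = (zet v u)⁻¹ := by
    intro u v hu hv
    apply Subtype.ext
    rw [Subgroup.coe_inv, zet_val u v hu hv, zet_val v u hv hu, ← map_inv,
      commutatorElement_inv]
  have zet_one_left : ∀ v : FreeGroup α, zet 1 v = 1 := by
    intro v
    rw [hzet]
    by_cases h : (1 : FreeGroup α) ∈ R ∧ v ∈ R
    · simp only [dif_pos h]
      apply Subtype.ext
      simp [commutatorElement_one_left]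
    · simp only [dif_neg h]
  have zet_mul_left : ∀ u w v : FreeGroup α, u ∈ R → w ∈ R → v ∈ R →
      zet (u * w) v = zet w v * zet u v := by
    intro u w v hu hw hv
    apply Subtype.ext
    rw [Subgroup.coe_mul, zet_val _ _ (R.mul_mem hu hw) hv, zet_val _ _ hw hv,
      zet_val _ _ hu hv]
    have hid : ⁅u * w, v⁆ = ⁅w, v⁆ * ⁅(⁅v, w⁆), u⁆ * ⁅u, v⁆ := by group
    rw [hid, map_mul, map_mul]
    have hmid : q ⁅(⁅v, w⁆), u⁆ = 1 := by
      apply hqone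
      rw [hN]
      exact Subgroup.commutator_mem_commutator
        (hRRle (Subgroup.commutator_mem_commutator hv hw)) hu
    rw [hmid, mul_one]
  have zet_comm_flag : ∀ u w v : FreeGroup α, u ∈ R → w ∈ R → v ∈ R →
      zet (u * w) v = zet u v * zet w v := by
    intro u w v hu hw hv
    rw [zet_mul_left u w v hu hw hv, mul_comm]
  have zet_left_K : ∀ u v : FreeGroup α, u ∈ R → u ∈ K → v ∈ R → zet u v = 1 := by
    intro u v huR huK hv
    apply Subtype.ext
    rw [zet_val u v huR hv, OneMemClass.coe_one]
    apply hqone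
    rw [hN]
    exact Subgroup.commutator_mem_commutator (Subgroup.mem_inf.mpr ⟨huR, huK⟩) hv
  have zet_inv_left : ∀ u v : FreeGroup α, u ∈ R → v ∈ R → zet u⁻¹ v = (zet u v)⁻¹ := by
    intro u v hu hv
    have h := zet_mul_left u⁻¹ u v (R.inv_mem hu) hu hv
    rw [inv_mul_cancel, zet_one_left] at h
    exact eq_inv_of_mul_eq_one_right h.symm
  have zet_zpow_left : ∀ (u v : FreeGroup α), u ∈ R → v ∈ R → ∀ m : ℤ,
      zet (u ^ m) v = (zet u v) ^ m := by
    intro u v hu hv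
    have hnat : ∀ n : ℕ, zet (u ^ n) v = (zet u v) ^ n := by
      intro n
      induction n with
      | zero => simpa using zet_one_left v
      | succ k ih =>
        rw [pow_succ, zet_comm_flag _ u v (R.pow_mem hu k) hu hv, ih, pow_succ]
    intro m
    cases m with
    | ofNat n => simpa using hnat n
    | negSucc n =>
      rw [zpow_negSucc, zet_inv_left _ v (R.pow_mem hu (n + 1)) hv, hnat (n + 1), zpow_negSucc]
  have zet_pim_congr : ∀ u u' v : FreeGroup α, u ∈ R → u' ∈ R → v ∈ R →
      pim u = pim u' → zet u v = zet u' v := by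
    intro u u' v hu hu' hv hpim
    have hcR : u⁻¹ * u' ∈ R := R.mul_mem (R.inv_mem hu) hu'
    have hcK : u⁻¹ * u' ∈ K := by
      rw [← pim_eq_one_iff]
      rw [map_mul, map_inv, hpim]
      simp
    have : zet u' v = zet (u * (u⁻¹ * u')) v := by rw [mul_inv_cancel_left]
    rw [this, zet_comm_flag u (u⁻¹ * u') v hu hcR hv, zet_left_K _ v hcR hcK hv, mul_one]
  have zet_list_left : ∀ (l : List (FreeGroup α)), (∀ g ∈ l, g ∈ R) →
      ∀ v : FreeGroup α, v ∈ R → zet l.prod v = (l.map fun g => zet g v).prod := by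
    intro l
    induction l with
    | nil => intro _ v _; simpa using zet_one_left v
    | cons hd tl ih =>
      intro hmem v hv
      have hhd : hd ∈ R := hmem hd List.mem_cons_self
      have htl : ∀ g ∈ tl, g ∈ R := fun g hg => hmem g (List.mem_cons_of_mem _ hg)
      rw [List.prod_cons, zet_comm_flag hd tl.prod v hhd (list_prod_mem htl) hv,
        List.map_cons, List.prod_cons, ih htl v hv]
  -- decompose x as a product of commutators
  obtain ⟨L, hL, hLx⟩ := comm_list R hxRR
  -- the finitely generated submodule
  set TF : Finset (α →₀ ℤ) :=
    ((L.map fun p => Multiplicative.toAdd (pim p.1)) ++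
     (L.map fun p => Multiplicative.toAdd (pim p.2))).toFinset with hTF
  set P : Submodule ℤ (α →₀ ℤ) := Submodule.span ℤ (TF : Set (α →₀ ℤ)) with hP
  have hmemP1 : ∀ p ∈ L, Multiplicative.toAdd (pim p.1) ∈ P := by
    intro p hp
    apply Submodule.subset_span
    simp only [hTF, List.coe_toFinset, List.mem_append, List.mem_map, Set.mem_setOf_eq]
    exact Or.inl ⟨p, hp, rfl⟩
  have hmemP2 : ∀ p ∈ L, Multiplicative.toAdd (pim p.2) ∈ P := by
    intro p hp
    apply Submodule.subset_span
    simp only [hTF, List.coe_toFinset, List.mem_append, List.mem_map, Set.mem_setOf_eq]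
    exact Or.inr ⟨p, hp, rfl⟩
  haveI : Module.Finite ℤ P := Module.Finite.span_of_finite ℤ (TF.finite_toSet)
  set ι := Module.Free.ChooseBasisIndex ℤ ↥P with hι
  set b : Module.Basis ι ℤ ↥P := Module.Free.chooseBasis ℤ ↥P with hb
  -- lift the basis into R
  have hPR : P ≤ pimR R := by
    rw [hP, Submodule.span_le]
    intro m hm
    simp only [hTF, List.coe_toFinset, List.mem_append, List.mem_map, Set.mem_setOf_eq] at hm
    rcases hm with ⟨p, hp, rfl⟩ | ⟨p, hp, rfl⟩
    · exact ⟨p.1, (hL p hp).1, rfl⟩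
    · exact ⟨p.2, (hL p hp).2, rfl⟩
  have hlift : ∀ i : ι, ∃ u ∈ R, Multiplicative.toAdd (pim u) = (b i : (α →₀ ℤ)) := by
    intro i
    exact hPR (b i).2
  choose r hrR hra using hlift
  -- coordinates
  set co : (α →₀ ℤ) → ι → ℤ := fun m i => if h : m ∈ P then b.repr ⟨m, h⟩ i else 0 with hco
  -- expansion of zet over the basis, left slot
  have expand_left : ∀ u v : FreeGroup α, u ∈ R → v ∈ R →
      Multiplicative.toAdd (pim u) ∈ P →
      zet u v = ∏ i, (zet (r i) v) ^ (co (Multiplicative.toAdd (pim u)) i) := by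
    intro u v hu hv hm
    set m : α →₀ ℤ := Multiplicative.toAdd (pim u) with hm'
    set w : FreeGroup α := (Finset.univ.toList.map fun i => r i ^ (co m i)).prod with hw
    have hwmem : ∀ g ∈ Finset.univ.toList.map fun i => r i ^ (co m i), g ∈ R := by
      intro g hg
      obtain ⟨i, _, rfl⟩ := List.mem_map.mp hg
      exact R.zpow_mem (hrR i) _
    have hwR : w ∈ R := list_prod_mem hwmem
    have hwpim : pim w = pim u := by
      apply Multiplicative.toAdd.injective
      rw [hw, map_list_prod, toAdd_list_prod, List.map_map, List.map_map]
      have hfun : ((Multiplicative.toAdd ∘ pim) ∘ fun i => r i ^ co m i)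
          = fun i : ι => co m i • (b i : (α →₀ ℤ)) := by
        funext i
        simp only [Function.comp_apply, map_zpow, toAdd_zpow, hra i]
      rw [hfun, Finset.sum_map_toList]
      have hrepr : ∀ i : ι, co m i = b.repr ⟨m, hm⟩ i := fun i => by
        rw [hco]; simp only [dif_pos hm]
      have h2 : ((((∑ i, b.repr ⟨m, hm⟩ i • b i : ↥P)) : (α →₀ ℤ))) = m :=
        congrArg (Subtype.val : ↥P → (α →₀ ℤ)) (b.sum_repr ⟨m, hm⟩)
      rw [show Multiplicative.toAdd (pim u) = m from rfl]
      have h3 : (∑ i, co m i • ((b i : (α →₀ ℤ))))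
          = (((∑ i, b.repr ⟨m, hm⟩ i • b i : ↥P)) : (α →₀ ℤ)) := by
        rw [AddSubmonoidClass.coe_finset_sum]
        apply Finset.sum_congr rfl
        intro i _
        rw [SetLike.val_smul, hrepr]
      rw [h3, h2]
    have h1 : zet u v = zet w v := zet_pim_congr u w v hu hwR hv hwpim.symm
    rw [h1, hw, zet_list_left _ hwmem v hv, List.map_map]
    have hfun2 : ((fun g => zet g v) ∘ fun i => r i ^ co m i)
        = fun i : ι => (zet (r i) v) ^ (co m i) := by
      funext i
      simp only [Function.comp_apply]
      exact zet_zpow_left (r i) v (hrR i) hv (co m i)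
    rw [hfun2, Finset.prod_map_toList]
  -- expansion, right slot
  have expand_right : ∀ u v : FreeGroup α, u ∈ R → v ∈ R →
      Multiplicative.toAdd (pim v) ∈ P →
      zet u v = ∏ j, (zet u (r j)) ^ (co (Multiplicative.toAdd (pim v)) j) := by
    intro u v hu hv hm
    rw [zet_inv_rev u v hu hv, expand_left v u hv hu hm]
    rw [← Finset.prod_inv_distrib]
    apply Finset.prod_congr rfl
    intro j _
    rw [← inv_zpow, ← zet_inv_rev u (r j) hu (hrR j)]
  -- double expansion
  have expand2 : ∀ u v : FreeGroup α, u ∈ R → v ∈ R →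
      Multiplicative.toAdd (pim u) ∈ P → Multiplicative.toAdd (pim v) ∈ P →
      zet u v = ∏ s : ι × ι, (zet (r s.1) (r s.2)) ^
        (co (Multiplicative.toAdd (pim u)) s.1 * co (Multiplicative.toAdd (pim v)) s.2) := by
    intro u v hu hv hmu hmv
    rw [← Finset.univ_product_univ, Finset.prod_product, expand_left u v hu hv hmu]
    apply Finset.prod_congr rfl
    intro i _
    rw [expand_right (r i) v (hrR i) hv hmv, ← Finset.prod_zpow]
    apply Finset.prod_congr rfl
    intro j _
    rw [← zpow_mul,
      Int.mul_comm (co (Multiplicative.toAdd (pim v)) j) (co (Multiplicative.toAdd (pim u)) i)]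
  -- the coefficients
  set n : ι → ι → ℤ := fun i j =>
    (L.map fun p => co (Multiplicative.toAdd (pim p.1)) i *
      co (Multiplicative.toAdd (pim p.2)) j).sum with hn
  -- membership of q x in Z
  have hqxZ : q x ∈ Z := Subgroup.mem_map_of_mem _ hxRR
  have hqx : (⟨q x, hqxZ⟩ : ↥Z) = ∏ s : ι × ι, (zet (r s.1) (r s.2)) ^ (n s.1 s.2) := by
    have h1 : (⟨q x, hqxZ⟩ : ↥Z) = (L.map fun p => zet p.1 p.2).prod := by
      apply Subtype.ext
      rw [SubmonoidClass.coe_list_prod]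
      have h2 : (L.map fun p => zet p.1 p.2).map ((↑) : ↥Z → FreeGroup α ⧸ N)
          = L.map fun p => q ⁅p.1, p.2⁆ := by
        rw [List.map_map]
        apply List.map_congr_left
        intro p hp
        exact zet_val p.1 p.2 (hL p hp).1 (hL p hp).2
      rw [h2]
      show q x = _
      rw [← hLx, map_list_prod, List.map_map]
      rfl
    rw [h1]
    have h3 : L.map (fun p => zet p.1 p.2)
        = L.map fun p => ∏ s : ι × ι, (zet (r s.1) (r s.2)) ^
            (co (Multiplicative.toAdd (pim p.1)) s.1 *
             co (Multiplicative.toAdd (pim p.2)) s.2) := by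
      apply List.map_congr_left
      intro p hp
      exact expand2 p.1 p.2 (hL p hp).1 (hL p hp).2 (hmemP1 p hp) (hmemP2 p hp)
    rw [h3, list_expand]
  -- symmetry of the coefficients, via the Heisenberg representation
  have hsym : ∀ p₀ q₀ : ι, n p₀ q₀ = n q₀ p₀ := by
    intro p₀ q₀
    -- linear independence over ℚ
    have hliZ : LinearIndependent ℤ (fun i : ι => (b i : (α →₀ ℤ))) :=
      b.linearIndependent.map' P.subtype (Submodule.ker_subtype P)
    have hliZV : LinearIndependent ℤ (fun i : ι => jQ (b i : (α →₀ ℤ))) :=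
      hliZ.map' jQ (LinearMap.ker_eq_bot.mpr jQ_inj)
    have hliV : LinearIndependent ℚ (fun i : ι => jQ (b i : (α →₀ ℤ))) :=
      (LinearIndependent.iff_fractionRing ℤ ℚ).mp hliZV
    set av : ι → (α →₀ ℚ) := fun i => jQ (b i : (α →₀ ℤ)) with hav
    have hinj : Function.Injective av := hliV.injective
    have hsubli : LinearIndepOn ℚ id (Set.range av) :=
      hliV.linearIndepOn_id
    set Bas := Module.Basis.extend hsubli with hBas
    have hmemB : ∀ i : ι, av i ∈ hsubli.extend (Set.subset_univ _) :=
      fun i => hsubli.subset_extend _ ⟨i, rfl⟩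
    set fdual : ι → ((α →₀ ℚ) →ₗ[ℚ] ℚ) := fun i => Bas.coord ⟨av i, hmemB i⟩ with hfdual
    have hdual : ∀ i k : ι, fdual i (av k) = if i = k then 1 else 0 := by
      intro i k
      have h3 : av k = Bas ⟨av k, hmemB k⟩ := (Module.Basis.extend_apply_self hsubli ⟨av k, _⟩).symm
      rw [hfdual]
      simp only
      rw [h3, Module.Basis.coord_apply, Module.Basis.repr_self, Finsupp.single_apply]
      by_cases h : i = k
      · subst h; simp
      · rw [if_neg, if_neg h]
        intro hcon
        exact h ((hinj (congrArg Subtype.val hcon)).symm)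
    set f := fdual p₀
    set g := fdual q₀
    have hphiN : ∀ y ∈ N, y ∈ (phi f g).ker := fun y hy =>
      MonoidHom.mem_ker.mpr (phi_lcs2 f g (hNle2 hy))
    set φ' : (FreeGroup α ⧸ N) →* Heis := QuotientGroup.lift N (phi f g) hphiN with hφ'
    have hφ'q : ∀ y : FreeGroup α, φ' (q y) = phi f g y := fun y => rfl
    -- a and b components vanish on Z
    have hZab : ∀ z : ↥Z, (φ' (z : FreeGroup α ⧸ N)).a = 0 ∧ (φ' z).b = 0 := by
      rintro ⟨z, hz⟩
      obtain ⟨g₀, hg₀, rfl⟩ := hz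
      have hg₀K : pim g₀ = 1 := (pim_eq_one_iff g₀).mpr (hRR_K hg₀)
      constructor
      · show (φ' (q g₀)).a = 0
        rw [hφ'q, phi_a, hg₀K]
        simp
      · show (φ' (q g₀)).b = 0
        rw [hφ'q, phi_b, hg₀K]
        simp
    -- the extraction homomorphism
    have hψadd : ∀ z w : ↥Z, (φ' (((z * w : ↥Z)) : FreeGroup α ⧸ N)).c
        = (φ' (z : FreeGroup α ⧸ N)).c + (φ' (w : FreeGroup α ⧸ N)).c := by
      intro z w
      show (φ' ((z : FreeGroup α ⧸ N) * (w : FreeGroup α ⧸ N))).c = _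
      rw [map_mul]
      show (φ' (z : FreeGroup α ⧸ N)).c + (φ' (w : FreeGroup α ⧸ N)).c
        + (φ' (z : FreeGroup α ⧸ N)).a * (φ' (w : FreeGroup α ⧸ N)).b = _
      rw [(hZab z).1, zero_mul, add_zero]
    set ψ : ↥Z →* Multiplicative ℚ := MonoidHom.mk'
      (fun z => Multiplicative.ofAdd ((φ' (z : FreeGroup α ⧸ N)).c))
      (fun z w => congrArg Multiplicative.ofAdd (hψadd z w)) with hψ
    have hψval : ∀ z : ↥Z, Multiplicative.toAdd (ψ z) = (φ' (z : FreeGroup α ⧸ N)).c :=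
      fun z => rfl
    -- value on generators
    have hφa : ∀ i : ι, (phi f g (r i)).a = if p₀ = i then 1 else 0 := by
      intro i
      rw [phi_a, hra i]
      exact hdual p₀ i
    have hφb : ∀ i : ι, (phi f g (r i)).b = if q₀ = i then 1 else 0 := by
      intro i
      rw [phi_b, hra i]
      exact hdual q₀ i
    have hval : ∀ i j : ι, Multiplicative.toAdd (ψ (zet (r i) (r j)))
        = (if p₀ = i then (1:ℚ) else 0) * (if q₀ = j then 1 else 0)
          - (if p₀ = j then 1 else 0) * (if q₀ = i then 1 else 0) := by
      intro i j
      rw [hψval, zet_val (r i) (r j) (hrR i) (hrR j), hφ'q, map_commutatorElement,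
        Heis.commutator_eq]
      show (phi f g (r i)).a * (phi f g (r j)).b - (phi f g (r j)).a * (phi f g (r i)).b = _
      rw [hφa i, hφb j, hφa j, hφb i]
    -- apply ψ to hqx
    have happ := congrArg (fun z : ↥Z => Multiplicative.toAdd (ψ z)) hqx
    have hL0 : Multiplicative.toAdd (ψ ⟨q x, hqxZ⟩) = 0 := by
      rw [hψval]
      show (φ' (q x)).c = 0
      rw [hφ'q, phi_lcs2 f g hxγ3]
      rfl
    rw [hL0, map_prod] at happ
    rw [toAdd_prod] at happ
    have hR0 : ∑ s : ι × ι, Multiplicative.toAdd (ψ ((zet (r s.1) (r s.2)) ^ (n s.1 s.2)))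
        = (n p₀ q₀ : ℚ) - (n q₀ p₀ : ℚ) := by
      have hterm : ∀ s : ι × ι, Multiplicative.toAdd (ψ ((zet (r s.1) (r s.2)) ^ (n s.1 s.2)))
          = (n s.1 s.2 : ℚ) * ((if p₀ = s.1 then (1:ℚ) else 0) * (if q₀ = s.2 then 1 else 0)
            - (if p₀ = s.2 then 1 else 0) * (if q₀ = s.1 then 1 else 0)) := by
        intro s
        rw [map_zpow, toAdd_zpow, hval s.1 s.2, zsmul_eq_mul]
      rw [Finset.sum_congr rfl fun s _ => hterm s]
      rw [← Finset.univ_product_univ, Finset.sum_product]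
      simp only [mul_sub, Finset.sum_sub_distrib]
      congr 1
      · rw [Finset.sum_comm]
        simp [Finset.sum_ite_eq, mul_ite, ite_mul, mul_one, mul_zero, zero_mul, one_mul]
      · simp [Finset.sum_ite_eq, mul_ite, ite_mul, mul_one, mul_zero, zero_mul, one_mul]
    rw [hR0] at happ
    have : (n p₀ q₀ : ℚ) = (n q₀ p₀ : ℚ) := by linarith [happ.symm]
    exact_mod_cast this
  -- conclude
  have hone : (⟨q x, hqxZ⟩ : ↥Z) = 1 := by
    rw [hqx]
    apply Finset.prod_ninvolution (g := fun s : ι × ι => (s.2, s.1))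
    · intro s
      rw [zet_inv_rev (r s.2) (r s.1) (hrR s.2) (hrR s.1), inv_zpow, ← zpow_neg, ← zpow_add,
        hsym s.1 s.2]
      simp
    · intro s hs hswap
      apply hs
      have h12 : s.2 = s.1 := congrArg Prod.fst hswap
      have hz : zet (r s.1) (r s.2) = 1 := by
        apply Subtype.ext
        rw [zet_val _ _ (hrR s.1) (hrR s.2), h12, commutatorElement_self, map_one]
        rfl
      rw [hz, one_zpow]
    · intro s; exact Finset.mem_univ _
    · intro s; rfl
  have hqx1 : q x = 1 := congrArg Subtype.val hone
  exact (QuotientGroup.eq_one_iff x).mp hqx1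
end

section
/- Let F be a free group with relation ideal 𝔯 of a normal subgroup R, and let x, y ∈ R ∩ γ₂(F) and m ≥ 1 with x^m = r_x s_x and y^m = r_y s_y, where r_x, r_y ∈ R ∩ γ₃(F) and s_x, s_y ∈ γ₂(R). Then the element w := [x, y]^m [x, s_y]^{−1} [y, s_x] satisfies w − 1 ∈ 𝔯𝔣³, i.e., w ∈ F(3, R) := F ∩ (1 + 𝔯𝔣³). -/
/-- The augmentation map of the integral group ring `ℤ[F]`. -/
noncomputable def aug (F : Type) [Group F] : MonoidAlgebra ℤ F →ₐ[ℤ] ℤ :=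
  MonoidAlgebra.lift ℤ ℤ F 1

/-- The augmentation ideal `𝔣` of `ℤ[F]`, as a `ℤ`-submodule of `ℤ[F]`. -/
noncomputable def fI (F : Type) [Group F] : Submodule ℤ (MonoidAlgebra ℤ F) :=
  Submodule.restrictScalars ℤ (RingHom.ker (aug F).toRingHom)

/-- The relation ideal `𝔯 = 𝔯ℤ[F]` of a (normal) subgroup `R ≤ F`: the two-sided ideal of
`ℤ[F]` generated by `{r - 1 : r ∈ R}` (for `R` normal this is the span of the elements
`(r - 1)·g`), as a `ℤ`-submodule of `ℤ[F]`. -/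
noncomputable def rI {F : Type} [Group F] (R : Subgroup F) :
    Submodule ℤ (MonoidAlgebra ℤ F) :=
  Submodule.restrictScalars ℤ (Ideal.span
    {x | ∃ r ∈ R, ∃ g : F, x = (MonoidAlgebra.of ℤ F r - 1) * MonoidAlgebra.of ℤ F g})
namespace FoxAux
variable {G : Type} [Group G]

noncomputable def d (g : G) : MonoidAlgebra ℤ G := MonoidAlgebra.of ℤ G g - 1

lemma aug_of (g : G) : aug G (MonoidAlgebra.of ℤ G g) = 1 := by
  show (MonoidAlgebra.lift ℤ ℤ G 1) (MonoidAlgebra.single g 1) = 1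
  rw [MonoidAlgebra.lift_single]
  simp

lemma mem_fI_iff {a : MonoidAlgebra ℤ G} : a ∈ fI G ↔ aug G a = 0 := by
  simp only [fI, Submodule.restrictScalars_mem, RingHom.mem_ker, AlgHom.toRingHom_eq_coe,
    RingHom.coe_coe]

lemma d_mem_fI (g : G) : d g ∈ fI G := by
  rw [mem_fI_iff, d, map_sub, map_one, aug_of, sub_self]

lemma mul_mem_fI {a : MonoidAlgebra ℤ G} (h : a ∈ fI G) (c : MonoidAlgebra ℤ G) :
    a * c ∈ fI G := by
  rw [mem_fI_iff] at h ⊢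
  rw [map_mul, h, zero_mul]

lemma mem_fI_mul {a : MonoidAlgebra ℤ G} (h : a ∈ fI G) (c : MonoidAlgebra ℤ G) :
    c * a ∈ fI G := by
  rw [mem_fI_iff] at h ⊢
  rw [map_mul, h, mul_zero]

def LAbs (P : Submodule ℤ (MonoidAlgebra ℤ G)) : Prop :=
  ∀ c : MonoidAlgebra ℤ G, ∀ a ∈ P, c * a ∈ P

def RAbs (P : Submodule ℤ (MonoidAlgebra ℤ G)) : Prop :=
  ∀ a ∈ P, ∀ c : MonoidAlgebra ℤ G, a * c ∈ P

lemma LAbs.mul {P Q : Submodule ℤ (MonoidAlgebra ℤ G)} (h : LAbs P) : LAbs (P * Q) := by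
  intro c a ha
  refine Submodule.mul_induction_on ha (fun p hp q hq => ?_) (fun u v hu hv => ?_)
  · rw [← mul_assoc]; exact Submodule.mul_mem_mul (h c p hp) hq
  · rw [mul_add]; exact add_mem hu hv

lemma RAbs.mul {P Q : Submodule ℤ (MonoidAlgebra ℤ G)} (h : RAbs Q) : RAbs (P * Q) := by
  intro a ha c
  refine Submodule.mul_induction_on ha (fun p hp q hq => ?_) (fun u v hu hv => ?_)
  · rw [mul_assoc]; exact Submodule.mul_mem_mul hp (h q hq c)
  · rw [add_mul]; exact add_mem hu hv

lemma fI_LAbs : LAbs (fI G) := fun c a ha => mem_fI_mul ha c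
lemma fI_RAbs : RAbs (fI G) := fun a ha c => mul_mem_fI ha c

lemma fI_pow_RAbs (n : ℕ) : RAbs ((fI G) ^ (n + 1)) := by
  rw [pow_succ]; exact RAbs.mul fI_RAbs

lemma fI_pow_LAbs (n : ℕ) : LAbs ((fI G) ^ (n + 1)) := by
  rw [pow_succ']; exact LAbs.mul fI_LAbs

lemma rI_LAbs (R : Subgroup G) : LAbs (rI R) := by
  intro c a ha
  have := (Ideal.span _ : Ideal (MonoidAlgebra ℤ G)).smul_mem c ha
  simpa [smul_eq_mul, rI] using this

lemma d_mem_rI {R : Subgroup G} {r : G} (hr : r ∈ R) : d r ∈ rI R := by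
  have : d r = (MonoidAlgebra.of ℤ G r - 1) * MonoidAlgebra.of ℤ G 1 := by
    rw [map_one, mul_one]; rfl
  rw [this]
  exact Ideal.subset_span ⟨r, hr, 1, rfl⟩

lemma rI_le_fI (R : Subgroup G) : rI R ≤ fI G := by
  intro a ha
  simp only [rI, Submodule.restrictScalars_mem] at ha
  have : Ideal.span {x | ∃ r ∈ R, ∃ g : G, x =
      (MonoidAlgebra.of ℤ G r - 1) * MonoidAlgebra.of ℤ G g} ≤ RingHom.ker (aug G).toRingHom := by
    refine Ideal.span_le.mpr ?_
    rintro _ ⟨r, hr, g, rfl⟩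
    show _ ∈ RingHom.ker (aug G).toRingHom
    rw [RingHom.mem_ker]
    show aug G ((MonoidAlgebra.of ℤ G r - 1) * MonoidAlgebra.of ℤ G g) = 0
    rw [map_mul, map_sub, map_one, aug_of, sub_self, zero_mul]
  exact this ha

lemma d_mul (g h : G) : d (g * h) = d g + d h + d g * d h := by
  simp only [d, map_mul]; noncomm_ring

lemma d_inv (g : G) : d g⁻¹ = -(MonoidAlgebra.of ℤ G g⁻¹ * d g) := by
  simp only [d, mul_sub, mul_one, ← map_mul, inv_mul_cancel, map_one]
  noncomm_ring

lemma d_comm (a b : G) :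
    d (a⁻¹ * b⁻¹ * a * b) =
      MonoidAlgebra.of ℤ G (a⁻¹ * b⁻¹) * (d a * d b - d b * d a) := by
  have key : d a * d b - d b * d a =
      MonoidAlgebra.of ℤ G a * MonoidAlgebra.of ℤ G b -
      MonoidAlgebra.of ℤ G b * MonoidAlgebra.of ℤ G a := by
    simp only [d]; noncomm_ring
  rw [key, mul_sub, ← map_mul, ← map_mul, ← map_mul, ← map_mul]
  have h1 : a⁻¹ * b⁻¹ * (a * b) = a⁻¹ * b⁻¹ * a * b := by group
  have h2 : a⁻¹ * b⁻¹ * (b * a) = 1 := by group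
  rw [h1, h2, map_one, d]

lemma d_one : d (1 : G) = 0 := by rw [d, map_one, sub_self]

-- commutator of subgroups closure lemma
lemma d_comm' (a b : G) :
    d (a * b * a⁻¹ * b⁻¹) =
      MonoidAlgebra.of ℤ G (a * b) * (d a⁻¹ * d b⁻¹ - d b⁻¹ * d a⁻¹) := by
  have := d_comm a⁻¹ b⁻¹
  simpa using this

lemma d_commutator_mem {H K : Subgroup G} {S : Submodule ℤ (MonoidAlgebra ℤ G)}
    (hL : LAbs S) (hR : RAbs S)
    (hgen : ∀ h ∈ H, ∀ k ∈ K, d h * d k ∈ S ∧ d k * d h ∈ S) :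
    ∀ g ∈ ⁅H, K⁆, d g ∈ S := by
  intro g hg
  rw [Subgroup.commutator_def] at hg
  induction hg using Subgroup.closure_induction with
  | mem z hz =>
    obtain ⟨p, hp, q, hq, rfl⟩ := hz
    rw [commutatorElement_def, d_comm' p q]
    have := hgen p⁻¹ (inv_mem hp) q⁻¹ (inv_mem hq)
    exact hL _ _ (sub_mem this.1 this.2)
  | one => rw [d_one]; exact zero_mem S
  | mul u v hu hv ihu ihv =>
    rw [d_mul]
    exact add_mem (add_mem ihu ihv) (hR _ ihu _)
  | inv u hu ihu =>
    rw [d_inv]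
    exact neg_mem (hL _ _ ihu)

lemma d_mem_fI_sq {g : G} (hg : g ∈ Subgroup.lowerCentralSeries (⊤ : Subgroup G) 1) : d g ∈ (fI G) ^ 2 := by
  have h1 : Subgroup.lowerCentralSeries (⊤ : Subgroup G) 1 = ⁅(⊤ : Subgroup G), ⊤⁆ := by
    rw [Subgroup.top_lowerCentralSeries_one, commutator_def]
  rw [h1] at hg
  refine d_commutator_mem (fI_pow_LAbs 1) (fI_pow_RAbs 1) (fun h _ k _ => ?_) g hg
  constructor <;> · rw [sq]; exact Submodule.mul_mem_mul (d_mem_fI _) (d_mem_fI _)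

lemma d_mem_fI_cube {g : G} (hg : g ∈ Subgroup.lowerCentralSeries (⊤ : Subgroup G) 2) : d g ∈ (fI G) ^ 3 := by
  have h1 : Subgroup.lowerCentralSeries (⊤ : Subgroup G) 2 = ⁅Subgroup.lowerCentralSeries (⊤ : Subgroup G) 1, ⊤⁆ := by
    rw [Subgroup.lowerCentralSeries_succ]
  rw [h1] at hg
  refine d_commutator_mem (fI_pow_LAbs 2) (fI_pow_RAbs 2) (fun h hh k _ => ?_) g hg
  constructor
  · rw [pow_succ]; exact Submodule.mul_mem_mul (d_mem_fI_sq hh) (d_mem_fI _)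
  · rw [pow_succ']; exact Submodule.mul_mem_mul (d_mem_fI _) (d_mem_fI_sq hh)

lemma d_mem_T {R : Subgroup G} {g : G} (hg : g ∈ ⁅R, R⁆) : d g ∈ rI R * fI G := by
  refine d_commutator_mem ((rI_LAbs R).mul) (RAbs.mul fI_RAbs) (fun h hh k hk => ?_) g hg
  exact ⟨Submodule.mul_mem_mul (d_mem_rI hh) (d_mem_fI _),
    Submodule.mul_mem_mul (d_mem_rI hk) (d_mem_fI _)⟩

-- power lemma
lemma d_pow {c : G} {N M : Submodule ℤ (MonoidAlgebra ℤ G)}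
    (hc : d c ∈ N) (hMN : M ≤ N)
    (hmul : ∀ a ∈ N, a * d c ∈ M) :
    ∀ k : ℕ, d (c ^ k) ∈ N ∧ d (c ^ k) - (k : ℤ) • d c ∈ M := by
  intro k
  induction k with
  | zero => simp [pow_zero, d_one]
  | succ k ih =>
    have hstep : d (c ^ (k + 1)) = d (c ^ k) + d c + d (c ^ k) * d c := by
      rw [← d_mul, pow_succ]
    have hprod : d (c ^ k) * d c ∈ M := hmul _ ih.1
    constructor
    · rw [hstep]; exact add_mem (add_mem ih.1 hc) (hMN hprod)
    · have : d (c ^ (k + 1)) - ((k : ℤ) + 1) • d c =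
          (d (c ^ k) - (k : ℤ) • d c) + d (c ^ k) * d c := by
        rw [hstep]; push_cast; module
      rw [Nat.cast_add, Nat.cast_one, this]
      exact add_mem ih.2 hprod

end FoxAux

open FoxAux in
/-- Let `F` be free, `R` normal in `F`, `x, y ∈ R ∩ γ₂(F)`, `m ≥ 1`, with
`x^m = r_x s_x`, `y^m = r_y s_y`, where `r_x, r_y ∈ R ∩ γ₃(F)` and `s_x, s_y ∈ γ₂(R)`.
Then `w = [x,y]^m [x,s_y]⁻¹ [y,s_x]` (with `[a,b] = a⁻¹b⁻¹ab`) satisfies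
`w - 1 ∈ 𝔯𝔣³`, i.e. `w ∈ F(3, R) = F ∩ (1 + 𝔯𝔣³)`. -/
theorem elem_of_third_fox_subgroup
    (α : Type) (R : Subgroup (FreeGroup α)) [R.Normal]
    (m : ℕ) (hm : 1 ≤ m) (x y rx ry sx sy : FreeGroup α)
    (hx : x ∈ R ⊓ Subgroup.lowerCentralSeries (⊤ : Subgroup (FreeGroup α)) 1)
    (hy : y ∈ R ⊓ Subgroup.lowerCentralSeries (⊤ : Subgroup (FreeGroup α)) 1)
    (hrx : rx ∈ R ⊓ Subgroup.lowerCentralSeries (⊤ : Subgroup (FreeGroup α)) 2)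
    (hry : ry ∈ R ⊓ Subgroup.lowerCentralSeries (⊤ : Subgroup (FreeGroup α)) 2)
    (hsx : sx ∈ ⁅R, R⁆) (hsy : sy ∈ ⁅R, R⁆)
    (hxm : x ^ m = rx * sx) (hym : y ^ m = ry * sy) :
    MonoidAlgebra.of ℤ (FreeGroup α)
        ((x⁻¹ * y⁻¹ * x * y) ^ m * (x⁻¹ * sy⁻¹ * x * sy)⁻¹ * (y⁻¹ * sx⁻¹ * y * sx)) - 1 ∈
      rI R * fI (FreeGroup α) ^ 3 := by
  set M : Submodule ℤ (MonoidAlgebra ℤ (FreeGroup α)) := rI R * fI (FreeGroup α) ^ 3 with hM_def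
  set N : Submodule ℤ (MonoidAlgebra ℤ (FreeGroup α)) := rI R * fI (FreeGroup α) ^ 2 with hN_def
  set T : Submodule ℤ (MonoidAlgebra ℤ (FreeGroup α)) := rI R * fI (FreeGroup α) with hT_def
  -- basic memberships
  have dxR : d x ∈ rI R := d_mem_rI hx.1
  have dyR : d y ∈ rI R := d_mem_rI hy.1
  have dx2 : d x ∈ fI (FreeGroup α) ^ 2 := d_mem_fI_sq hx.2
  have dy2 : d y ∈ fI (FreeGroup α) ^ 2 := d_mem_fI_sq hy.2
  have drx3 : d rx ∈ fI (FreeGroup α) ^ 3 := d_mem_fI_cube hrx.2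
  have dry3 : d ry ∈ fI (FreeGroup α) ^ 3 := d_mem_fI_cube hry.2
  have dsxT : d sx ∈ T := d_mem_T hsx
  have dsyT : d sy ∈ T := d_mem_T hsy
  have hT_le : T ≤ fI (FreeGroup α) ^ 2 := by
    rw [hT_def, sq]; exact mul_le_mul' (rI_le_fI R) le_rfl
  have dsx2 : d sx ∈ fI (FreeGroup α) ^ 2 := hT_le dsxT
  have dsy2 : d sy ∈ fI (FreeGroup α) ^ 2 := hT_le dsyT
  have pow_le : ∀ n : ℕ, (fI (FreeGroup α)) ^ (n + 2) ≤ (fI (FreeGroup α)) ^ (n + 1) := fun n => by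
    rw [pow_succ]; exact Submodule.mul_le.mpr (fun a ha b hb => fI_pow_RAbs n a ha b)
  have hfI2 : ∀ g : FreeGroup α, d g ∈ fI (FreeGroup α) := d_mem_fI
  have hMN : M ≤ N := mul_le_mul' le_rfl (pow_le 1)
  have hN_le2 : N ≤ fI (FreeGroup α) ^ 2 := by
    refine le_trans (mul_le_mul' (rI_le_fI R) le_rfl) ?_
    rw [← pow_succ']
    exact pow_le 1
  have hM_L : LAbs M := (rI_LAbs R).mul
  have hN_L : LAbs N := (rI_LAbs R).mul
  have hM_R : RAbs M := RAbs.mul (fI_pow_RAbs 2)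
  -- product rules
  have hNf : ∀ a ∈ N, ∀ b ∈ fI (FreeGroup α), a * b ∈ M := fun a ha b hb => by
    have := Submodule.mul_mem_mul ha hb
    rwa [hN_def, mul_assoc, ← pow_succ] at this
  have hTf2 : ∀ a ∈ T, ∀ b ∈ fI (FreeGroup α) ^ 2, a * b ∈ M := fun a ha b hb => by
    have := Submodule.mul_mem_mul ha hb
    rwa [hT_def, mul_assoc, ← pow_succ'] at this
  have hr4 : ∀ a ∈ rI R, ∀ b ∈ fI (FreeGroup α) ^ 4, a * b ∈ M :=
    fun a ha b hb => mul_le_mul' le_rfl (pow_le 2) (Submodule.mul_mem_mul ha hb)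
  have hr3 : ∀ a ∈ rI R, ∀ b ∈ fI (FreeGroup α) ^ 3, a * b ∈ M :=
    fun a ha b hb => Submodule.mul_mem_mul ha hb
  -- the three group elements
  set c : FreeGroup α := x⁻¹ * y⁻¹ * x * y with hc_def
  set dd : FreeGroup α := x⁻¹ * sy⁻¹ * x * sy with hdd_def
  set e : FreeGroup α := y⁻¹ * sx⁻¹ * y * sx with he_def
  set u : MonoidAlgebra ℤ (FreeGroup α) := MonoidAlgebra.of ℤ (FreeGroup α) (x⁻¹ * y⁻¹) with hu_def
  set vB : MonoidAlgebra ℤ (FreeGroup α) := MonoidAlgebra.of ℤ (FreeGroup α) (sy⁻¹ * x⁻¹) with hvB_def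
  set vC : MonoidAlgebra ℤ (FreeGroup α) := MonoidAlgebra.of ℤ (FreeGroup α) (y⁻¹ * sx⁻¹) with hvC_def
  have hdc : d c = u * (d x * d y - d y * d x) := d_comm x y
  have hdcN : d c ∈ N := by
    rw [hdc]
    exact hN_L u _ (sub_mem (Submodule.mul_mem_mul dxR dy2) (Submodule.mul_mem_mul dyR dx2))
  have hdc2 : d c ∈ fI (FreeGroup α) ^ 2 := hN_le2 hdcN
  -- power lemmas
  have hpowc := d_pow (G := FreeGroup α) hdcN hMN
    (fun a ha => by
      have := Submodule.mul_mem_mul ha hdc2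
      rw [hN_def, mul_assoc, show fI (FreeGroup α) ^ 2 * fI (FreeGroup α) ^ 2 = fI (FreeGroup α) ^ 4 from by rw [← pow_add]] at this
      exact mul_le_mul' le_rfl (pow_le 2) this) m
  have fI4_le_fI2 : (fI (FreeGroup α) : Submodule ℤ (MonoidAlgebra ℤ (FreeGroup α))) ^ 4 ≤ fI (FreeGroup α) ^ 2 :=
    le_trans (pow_le 2) (pow_le 1)
  have hpow4 : ∀ z : FreeGroup α, d z ∈ fI (FreeGroup α) ^ 2 →
      ∀ k : ℕ, d (z ^ k) - (k : ℤ) • d z ∈ fI (FreeGroup α) ^ 4 := fun z hz k =>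
    (d_pow (G := FreeGroup α) hz fI4_le_fI2
      (fun a ha => by
        have := Submodule.mul_mem_mul ha hz
        rwa [show fI (FreeGroup α) ^ 2 * fI (FreeGroup α) ^ 2 = fI (FreeGroup α) ^ 4 from by rw [← pow_add]] at this) k).2
  have Ex : d (x ^ m) - (m : ℤ) • d x ∈ fI (FreeGroup α) ^ 4 := hpow4 x dx2 m
  have Ey : d (y ^ m) - (m : ℤ) • d y ∈ fI (FreeGroup α) ^ 4 := hpow4 y dy2 m
  -- Claim 1
  have smul_id : (m : ℤ) • d c = u * (d x * ((m : ℤ) • d y) - d y * ((m : ℤ) • d x)) := by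
    rw [hdc, mul_smul_comm, mul_smul_comm, ← smul_sub, mul_smul_comm]
  have s5 : d x * (d (y ^ m) - (m : ℤ) • d y) ∈ M := hr4 _ dxR _ Ey
  have s6 : d y * (d (x ^ m) - (m : ℤ) • d x) ∈ M := hr4 _ dyR _ Ex
  have s7 : d x * d (y ^ m) - d x * d sy ∈ M := by
    have heq : d x * d (y ^ m) - d x * d sy = d x * (d ry + d ry * d sy) := by
      rw [hym, d_mul]; noncomm_ring
    rw [heq]
    exact hr3 _ dxR _ (add_mem dry3 (fI_pow_RAbs 2 _ dry3 _))
  have s8 : d y * d (x ^ m) - d y * d sx ∈ M := by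
    have heq : d y * d (x ^ m) - d y * d sx = d y * (d rx + d rx * d sx) := by
      rw [hxm, d_mul]; noncomm_ring
    rw [heq]
    exact hr3 _ dyR _ (add_mem drx3 (fI_pow_RAbs 2 _ drx3 _))
  have claim1 : d (c ^ m) - u * (d x * d sy - d y * d sx) ∈ M := by
    have E : d (c ^ m) - u * (d x * d sy - d y * d sx) =
        (d (c ^ m) - (m : ℤ) • d c) +
          u * (-(d x * (d (y ^ m) - (m : ℤ) • d y)) + (d x * d (y ^ m) - d x * d sy)
            + (d y * (d (x ^ m) - (m : ℤ) • d x)) - (d y * d (x ^ m) - d y * d sx)) := by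
      rw [smul_id]
      generalize (m : ℤ) • d x = A
      generalize (m : ℤ) • d y = B
      noncomm_ring
    rw [E]
    exact add_mem hpowc.2
      (hM_L u _ (sub_mem (add_mem (add_mem (neg_mem s5) s7) s6) s8))
  -- Claim 2
  have hvB_eq : MonoidAlgebra.of ℤ (FreeGroup α) dd⁻¹ * MonoidAlgebra.of ℤ (FreeGroup α) (x⁻¹ * sy⁻¹) = vB := by
    rw [hvB_def, ← map_mul]
    congr 1
    rw [hdd_def]
    group
  have claim2 : d (dd⁻¹ : FreeGroup α) + vB * (d x * d sy) ∈ M := by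
    have E : d (dd⁻¹ : FreeGroup α) + vB * (d x * d sy) = vB * (d sy * d x) := by
      rw [d_inv, hdd_def, d_comm x sy, ← mul_assoc, ← hdd_def, hvB_eq]
      noncomm_ring
    rw [E]
    exact hM_L vB _ (hTf2 _ dsyT _ dx2)
  -- Claim 3
  have claim3 : d e - vC * (d y * d sx) ∈ M := by
    have E : d e - vC * (d y * d sx) = -(vC * (d sx * d y)) := by
      rw [he_def, d_comm y sx, ← hvC_def]
      noncomm_ring
    rw [E]
    exact neg_mem (hM_L vC _ (hTf2 _ dsxT _ dy2))
  -- Claim 4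
  have hxR : x ∈ R := hx.1
  have hyR : y ∈ R := hy.1
  have hsxR : sx ∈ R := Subgroup.commutator_le_left R R hsx
  have hsyR : sy ∈ R := Subgroup.commutator_le_left R R hsy
  have hg1 : (x * sy * x⁻¹ * y⁻¹ : FreeGroup α) ∈ R :=
    mul_mem (mul_mem (mul_mem hxR hsyR) (inv_mem hxR)) (inv_mem hyR)
  have claim4 : (u - vB) * (d x * d sy) ∈ M := by
    have E : u - vB = vB * d (x * sy * x⁻¹ * y⁻¹) := by
      rw [FoxAux.d, mul_sub, mul_one, ← map_mul, hu_def, hvB_def]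
      congr 2
      group
    rw [E, mul_assoc]
    refine hM_L vB _ (hr3 _ (d_mem_rI hg1) _ ?_)
    rw [show (3 : ℕ) = 2 + 1 from rfl, pow_succ]
    exact Submodule.mul_mem_mul dx2 (hfI2 sy)
  -- Claim 5
  have hg2 : (y * x * y⁻¹ * sx⁻¹ : FreeGroup α) ∈ R :=
    mul_mem (mul_mem (mul_mem hyR hxR) (inv_mem hyR)) (inv_mem hsxR)
  have claim5 : (vC - u) * (d y * d sx) ∈ M := by
    have E : vC - u = u * d (y * x * y⁻¹ * sx⁻¹) := by
      rw [FoxAux.d, mul_sub, mul_one, ← map_mul, hu_def, hvC_def]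
      congr 2
      group
    rw [E, mul_assoc]
    refine hM_L u _ (hr3 _ (d_mem_rI hg2) _ ?_)
    rw [show (3 : ℕ) = 2 + 1 from rfl, pow_succ]
    exact Submodule.mul_mem_mul dy2 (hfI2 sx)
  -- sum of the main terms
  have key : d (c ^ m) + d (dd⁻¹ : FreeGroup α) + d e ∈ M := by
    have E : d (c ^ m) + d (dd⁻¹ : FreeGroup α) + d e =
        (d (c ^ m) - u * (d x * d sy - d y * d sx)) + (d (dd⁻¹ : FreeGroup α) + vB * (d x * d sy))
          + (d e - vC * (d y * d sx)) + (u - vB) * (d x * d sy) + (vC - u) * (d y * d sx) := by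
      noncomm_ring
    rw [E]
    exact add_mem (add_mem (add_mem (add_mem claim1 claim2) claim3) claim4) claim5
  -- N memberships for cross terms
  have hcmN : d (c ^ m) ∈ N := hpowc.1
  have hBN : d (dd⁻¹ : FreeGroup α) ∈ N := by
    rw [d_inv, hdd_def, d_comm x sy]
    refine neg_mem (hN_L _ _ (hN_L _ _ (sub_mem ?_ ?_)))
    · exact Submodule.mul_mem_mul dxR (hT_le dsyT)
    · exact hMN (hTf2 _ dsyT _ dx2)
  -- final assembly
  show d (c ^ m * dd⁻¹ * e) ∈ M
  have hsplit : d (c ^ m * dd⁻¹ * e) =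
      (d (c ^ m) + d (dd⁻¹ : FreeGroup α) + d e) + (d (c ^ m) * d (dd⁻¹ : FreeGroup α)
        + (d (c ^ m) + d (dd⁻¹ : FreeGroup α) + d (c ^ m) * d (dd⁻¹ : FreeGroup α)) * d e) := by
    rw [d_mul, d_mul]
    noncomm_ring
  rw [hsplit]
  refine add_mem key (add_mem (hNf _ hcmN _ (hfI2 _)) (hNf _ ?_ _ (hfI2 _)))
  exact add_mem (add_mem hcmN hBN) (hMN (hNf _ hcmN _ (hfI2 _)))
end
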